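/- Consider words over the alphabet {0, 1, $}. Define a one-step rewriting relation → with rules 0$0 → $, 1$1 → $ (applicable at any position) and $ → λ (deleting an occurrence of $). Then for all x, y ∈ {0,1}*, the word x$y rewrites in finitely many steps to the empty word if and only if y is the reversal of x. -/

import Mathlib

inductive Sym13 : Type
  | zero : Sym13
  | one : Sym13
  | dollar : Sym13

open Sym13

/-- One-step rewriting with rules `0$0 → $`, `1$1 → $` and `$ → λ`. -/
inductive Step13 : List Sym13 → List Sym13 → Prop
  | zz (u w : List Sym13) :
      Step13 (u ++ [zero, dollar, zero] ++ w) (u ++ [dollar] ++ w)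
  | oo (u w : List Sym13) :
      Step13 (u ++ [one, dollar, one] ++ w) (u ++ [dollar] ++ w)
  | del (u w : List Sym13) :
      Step13 (u ++ [dollar] ++ w) (u ++ w)

def emb13 (b : Bool) : Sym13 := if b then one else zero

deriving instance DecidableEq for Sym13

lemma dollar_not_mem_map (x : List Bool) : dollar ∉ x.map emb13 := by
  simp only [List.mem_map, not_exists]
  rintro b ⟨-, hb⟩
  cases b <;> simp [emb13] at hb

lemma step_dollar_mem {s t : List Sym13} (h : Step13 s t) : dollar ∈ s := by
  cases h <;> simp

lemma uniq : ∀ (a c b d : List Sym13),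
    a ++ dollar :: b = c ++ dollar :: d → dollar ∉ a → dollar ∉ c →
    a = c ∧ b = d := by
  intro a
  induction a with
  | nil =>
    intro c b d h ha hc
    cases c with
    | nil => simpa using h
    | cons e c =>
      simp only [List.nil_append, List.cons_append, List.cons.injEq] at h
      exact absurd (h.1 ▸ (List.mem_cons_self : e ∈ e :: c)) hc
  | cons e a ih =>
    intro c b d h ha hc
    cases c with
    | nil =>
      simp only [List.nil_append, List.cons_append, List.cons.injEq] at h
      exact absurd (h.1 ▸ (List.mem_cons_self : e ∈ e :: a)) ha
    | cons f c =>
      simp only [List.cons_append, List.cons.injEq] at h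
      obtain ⟨rfl, h2⟩ := h
      have := ih c b d h2 (fun hm => ha (List.mem_cons_of_mem _ hm))
        (fun hm => hc (List.mem_cons_of_mem _ hm))
      exact ⟨by rw [this.1], this.2⟩

lemma ctx_closure {s t : List Sym13} (h : Relation.ReflTransGen Step13 s t)
    (u w : List Sym13) :
    Relation.ReflTransGen Step13 (u ++ s ++ w) (u ++ t ++ w) := by
  induction h with
  | refl => exact Relation.ReflTransGen.refl
  | tail _ hst ih =>
    refine ih.tail ?_
    cases hst with
    | zz a b =>
      have := Step13.zz (u ++ a) (b ++ w)
      simpa [List.append_assoc] using this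
    | oo a b =>
      have := Step13.oo (u ++ a) (b ++ w)
      simpa [List.append_assoc] using this
    | del a b =>
      have := Step13.del (u ++ a) (b ++ w)
      simpa [List.append_assoc] using this

lemma forward (x : List Bool) :
    Relation.ReflTransGen Step13
      (x.map emb13 ++ [dollar] ++ x.reverse.map emb13) [dollar] := by
  induction x with
  | nil => exact Relation.ReflTransGen.refl
  | cons a x ih =>
    have h1 := ctx_closure ih [emb13 a] [emb13 a]
    have h2 : Step13 [emb13 a, dollar, emb13 a] [dollar] := by
      cases a
      · simpa [emb13] using Step13.zz [] []
      · simpa [emb13] using Step13.oo [] []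
    have h3 : Relation.ReflTransGen Step13
        ([emb13 a] ++ (List.map emb13 x ++ [dollar] ++ List.map emb13 x.reverse) ++ [emb13 a])
        [dollar] := h1.tail (by simpa using h2)
    simpa [List.append_assoc] using h3

lemma backward : ∀ s : List Sym13, Relation.ReflTransGen Step13 s [] →
    ∀ x y : List Bool, s = x.map emb13 ++ [dollar] ++ y.map emb13 → y = x.reverse := by
  intro s hs
  induction hs using Relation.ReflTransGen.head_induction_on with
  | refl =>
    intro x y h
    exact absurd h.symm (by simp)
  | head hstep htail ih =>
    intro x y hs
    cases hstep with
    | del u w =>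
      have h : u ++ dollar :: w = x.map emb13 ++ dollar :: y.map emb13 := by
        simpa [List.append_assoc] using hs
      have hcnt : dollar ∉ u := by
        have hc := congrArg (List.count dollar) h
        simp [List.count_append, List.count_eq_zero.mpr (dollar_not_mem_map x),
          List.count_eq_zero.mpr (dollar_not_mem_map y)] at hc
        exact List.count_eq_zero.mp (by omega)
      obtain ⟨rfl, rfl⟩ := uniq u _ w _ h hcnt (dollar_not_mem_map x)
      have hnil : List.map emb13 x ++ List.map emb13 y = [] := by
        rcases (Relation.ReflTransGen.cases_head htail) with h0 | ⟨c, hc, -⟩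
        · simpa using h0
        · exact absurd (step_dollar_mem hc) (by
            simp only [List.mem_append]
            rintro (hm | hm)
            · exact dollar_not_mem_map x hm
            · exact dollar_not_mem_map y hm)
      simp only [List.append_eq_nil_iff, List.map_eq_nil_iff] at hnil
      simp [hnil.1, hnil.2]
    | zz u w =>
      have h : (u ++ [zero]) ++ dollar :: (zero :: w)
          = x.map emb13 ++ dollar :: y.map emb13 := by
        simpa [List.append_assoc] using hs
      have hcnt : dollar ∉ u ++ [zero] := by
        have hc := congrArg (List.count dollar) h
        simp [List.count_append, List.count_eq_zero.mpr (dollar_not_mem_map x),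
          List.count_eq_zero.mpr (dollar_not_mem_map y)] at hc
        intro hm
        rw [List.mem_append] at hm
        rcases hm with hm | hm
        · have := List.count_pos_iff.mpr hm
          omega
        · simp at hm
      obtain ⟨hx, hy⟩ := uniq _ _ _ _ h hcnt (dollar_not_mem_map x)
      obtain ⟨x1, x2, rfl, hx1, hx2⟩ := List.map_eq_append_iff.mp hx.symm
      cases y with
      | nil => exact absurd hy (by simp)
      | cons b y' =>
        rw [List.map_cons] at hy
        injection hy with hb hw
        have hb' : b = false := by
          cases b
          · rfl
          · exact absurd hb (by simp [emb13])
        cases x2 with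
        | nil => exact absurd hx2 (by simp)
        | cons a x2' =>
          rw [List.map_cons] at hx2
          injection hx2 with ha hx2'
          have ha' : a = false := by
            cases a
            · rfl
            · exact absurd ha (by simp [emb13])
          have hx2nil : x2' = [] := List.map_eq_nil_iff.mp hx2'
          subst ha' hb' hx2nil
          have hihres := ih x1 y' (by rw [hx1, ← hw])
          simp [hihres]
    | oo u w =>
      have h : (u ++ [one]) ++ dollar :: (one :: w)
          = x.map emb13 ++ dollar :: y.map emb13 := by
        simpa [List.append_assoc] using hs
      have hcnt : dollar ∉ u ++ [one] := by
        have hc := congrArg (List.count dollar) h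
        simp [List.count_append, List.count_eq_zero.mpr (dollar_not_mem_map x),
          List.count_eq_zero.mpr (dollar_not_mem_map y)] at hc
        intro hm
        rw [List.mem_append] at hm
        rcases hm with hm | hm
        · have := List.count_pos_iff.mpr hm
          omega
        · simp at hm
      obtain ⟨hx, hy⟩ := uniq _ _ _ _ h hcnt (dollar_not_mem_map x)
      obtain ⟨x1, x2, rfl, hx1, hx2⟩ := List.map_eq_append_iff.mp hx.symm
      cases y with
      | nil => exact absurd hy (by simp)
      | cons b y' =>
        rw [List.map_cons] at hy
        injection hy with hb hw
        have hb' : b = true := by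
          cases b
          · exact absurd hb (by simp [emb13])
          · rfl
        cases x2 with
        | nil => exact absurd hx2 (by simp)
        | cons a x2' =>
          rw [List.map_cons] at hx2
          injection hx2 with ha hx2'
          have ha' : a = true := by
            cases a
            · exact absurd ha (by simp [emb13])
            · rfl
          have hx2nil : x2' = [] := List.map_eq_nil_iff.mp hx2'
          subst ha' hb' hx2nil
          have hihres := ih x1 y' (by rw [hx1, ← hw])
          simp [hihres]

theorem stmt13 (x y : List Bool) :
    Relation.ReflTransGen Step13 (x.map emb13 ++ [dollar] ++ y.map emb13) [] ↔
      y = x.reverse := by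
  constructor
  · intro h
    exact backward _ h x y rfl
  · rintro rfl
    exact (forward x).tail (by simpa using Step13.del [] [])
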